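/- There exists a monotone semiflow on L¹₊(0,∞) that is not strongly order-preserving: specifically, for the linear semiflow (U(t)u₀)(a) = e^{-∫_{a-t}^a μ(l)dl}u₀(a-t)·𝟙_{a≥t} (the pure transport-decay part), for any u₀ < v₀ in L¹₊ ∩ L^∞₊ and any open neighborhoods U ∋ u₀, V ∋ v₀ and any t ≥ 0, there exists ũ₀ ∈ U with U(t)ũ₀ ≰ U(t)v₀; indeed ũ₀ = u₀ + ε^{-1}𝟙_{(0,ε²)} works for ε sufficiently small (then ũ₀ ∈ U and ũ₀ > v₀ a.e. on (0,ε²), so U(t)ũ₀ > U(t)v₀ a.e. on (t, t+ε²)). -/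

import Mathlib

open MeasureTheory Real Set

/-- the transport-decay semiflow on `L¹₊(0,∞)` is not strongly
order-preserving: arbitrarily close (in `L¹`) to `u₀` there are initial data whose
evolution is not below that of `v₀`. -/
theorem transport_semiflow_not_strongly_order_preserving
    (μ : ℝ → ℝ) (μlow : ℝ) (hμlow : 0 < μlow)
    (hμmeas : Measurable μ) (hμbdd : ∃ C, ∀ a, |μ a| ≤ C)
    (hμlb : ∀ᵐ a : ℝ, a ∈ Ioi (0:ℝ) → μlow ≤ μ a)
    (u₀ v₀ : ℝ → ℝ)
    (hu₀int : IntegrableOn u₀ (Ioi (0:ℝ))) (hv₀int : IntegrableOn v₀ (Ioi (0:ℝ)))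
    (hu₀pos : ∀ a, 0 ≤ u₀ a) (hv₀pos : ∀ a, 0 ≤ v₀ a)
    (Cu Cv : ℝ) (hu₀bdd : ∀ a, u₀ a ≤ Cu) (hv₀bdd : ∀ a, v₀ a ≤ Cv)
    (hle : ∀ᵐ a : ℝ, a ∈ Ioi (0:ℝ) → u₀ a ≤ v₀ a)
    (hne : 0 < volume {a : ℝ | a ∈ Ioi (0:ℝ) ∧ u₀ a < v₀ a})
    (U : ℝ → (ℝ → ℝ) → (ℝ → ℝ))
    (hU : ∀ t : ℝ, ∀ w : ℝ → ℝ, ∀ a : ℝ,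
      U t w a = if t ≤ a then exp (-∫ l in Ioc (a - t) a, μ l) * w (a - t) else 0) :
    ∀ δ : ℝ, 0 < δ → ∀ t : ℝ, 0 ≤ t →
      ∃ u' : ℝ → ℝ, IntegrableOn u' (Ioi (0:ℝ)) ∧ (∀ a, 0 ≤ u' a) ∧
        (∫ a in Ioi (0:ℝ), |u' a - u₀ a|) < δ ∧
        (∃ ε : ℝ, 0 < ε ∧ u' = fun a => u₀ a + ε⁻¹ * (Ioo (0:ℝ) (ε^2)).indicator 1 a) ∧
        0 < volume {a : ℝ | a ∈ Ioi (0:ℝ) ∧ U t v₀ a < U t u' a} := by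
  intro δ hδ t ht
  have hCv : 0 ≤ Cv := le_trans (hv₀pos 0) (hv₀bdd 0)
  have hCv1 : 0 < Cv + 1 := by linarith
  set ε : ℝ := min (δ / 2) (Cv + 1)⁻¹ with hεdef
  have hε : 0 < ε := lt_min (by linarith) (by positivity)
  have hεδ : ε < δ := lt_of_le_of_lt (min_le_left _ _) (by linarith)
  have hεinv : Cv + 1 ≤ ε⁻¹ := by
    have h1 : ε ≤ (Cv + 1)⁻¹ := min_le_right _ _
    calc Cv + 1 = ((Cv + 1)⁻¹)⁻¹ := (inv_inv _).symm
      _ ≤ ε⁻¹ := by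
        apply inv_anti₀ hε h1
  set u' : ℝ → ℝ := fun a => u₀ a + ε⁻¹ * (Ioo (0:ℝ) (ε^2)).indicator 1 a with hu'
  have hεsq : (0:ℝ) < ε ^ 2 := by positivity
  have hind_int : IntegrableOn (fun a => ε⁻¹ * (Ioo (0:ℝ) (ε^2)).indicator 1 a)
      (Ioi (0:ℝ)) := by
    apply Integrable.const_mul
    have : Integrable ((Ioo (0:ℝ) (ε^2)).indicator (1 : ℝ → ℝ)) volume :=
      (integrable_indicator_iff measurableSet_Ioo).2
        (integrableOn_const measure_Ioo_lt_top.ne)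
    exact this.integrableOn
  refine ⟨u', hu₀int.add hind_int, ?_, ?_, ⟨ε, hε, rfl⟩, ?_⟩
  · intro a
    have h1 : 0 ≤ (Ioo (0:ℝ) (ε^2)).indicator (1 : ℝ → ℝ) a := by
      apply Set.indicator_nonneg; intro x _; norm_num
    have h2 := hu₀pos a
    have hεi : 0 ≤ ε⁻¹ := by positivity
    simp only [hu']
    have h3 : 0 ≤ ε⁻¹ * (Ioo (0:ℝ) (ε^2)).indicator (1 : ℝ → ℝ) a := mul_nonneg hεi h1
    linarith
  · have heq : ∀ a, |u' a - u₀ a| = Set.indicator (Ioo (0:ℝ) (ε^2)) (fun _ => ε⁻¹) a := by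
      intro a
      simp only [hu', add_sub_cancel_left]
      by_cases h : a ∈ Ioo (0:ℝ) (ε^2)
      · simp [h, abs_of_nonneg (by positivity : (0:ℝ) ≤ ε⁻¹)]
      · simp [h]
    rw [MeasureTheory.integral_congr_ae (Filter.Eventually.of_forall heq)]
    rw [MeasureTheory.setIntegral_indicator measurableSet_Ioo]
    have : Ioi (0:ℝ) ∩ Ioo (0:ℝ) (ε^2) = Ioo (0:ℝ) (ε^2) := by
      apply inter_eq_self_of_subset_right
      intro x hx; exact hx.1
    rw [this, setIntegral_const, measureReal_def, Real.volume_Ioo, smul_eq_mul]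
    rw [ENNReal.toReal_ofReal (by linarith)]
    have : (ε ^ 2 - 0) * ε⁻¹ = ε := by field_simp; ring
    rw [this]; exact hεδ
  · have hsub : Ioo t (t + ε^2) ⊆ {a : ℝ | a ∈ Ioi (0:ℝ) ∧ U t v₀ a < U t u' a} := by
      intro a ha
      obtain ⟨ha1, ha2⟩ := ha
      have ha0 : 0 < a := lt_of_le_of_lt ht ha1
      refine ⟨ha0, ?_⟩
      rw [hU t v₀ a, hU t u' a, if_pos (le_of_lt ha1), if_pos (le_of_lt ha1)]
      apply mul_lt_mul_of_pos_left _ (Real.exp_pos _)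
      have hmem : a - t ∈ Ioo (0:ℝ) (ε^2) := ⟨by linarith, by linarith⟩
      have : u' (a - t) = u₀ (a - t) + ε⁻¹ := by
        simp [hu', Set.indicator_of_mem hmem]
      rw [this]
      have := hv₀bdd (a - t)
      have := hu₀pos (a - t)
      linarith
    calc (0 : ENNReal) < volume (Ioo t (t + ε^2)) := by
          rw [Real.volume_Ioo]; simp [ENNReal.ofReal_pos]; linarith
      _ ≤ _ := measure_mono hsub
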